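/- Let q be a prime and A = (Z/q)² viewed with its projective line P¹(F_q). Let f : A → S be an abelian flag function (invariant under multiplication by integers coprime to q, with a strict filtration by subgroups). Then f, considered as a function on P¹(F_q), is constant on the complement of at most one point of P¹(F_q). -/
import Mathlib


/-- A function on an abelian group is invariant if `f (n • a) = f a` for all nonzero
integers `n`. -/
def InvariantZ {A : Type*} [AddCommGroup A] {S : Type*} (f : A → S) : Prop :=
  ∀ n : ℤ, n ≠ 0 → ∀ a : A, f (n • a) = f a

/-- `f` admits a strict filtration of `A` by subgroups, indexed by a totally ordered set,
exhausting `A`, such that `f` is constant on each successive difference set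
`A_ι \ ⋃_{ι' > ι} A_{ι'}`. -/
def HasFlagFiltration {A : Type*} [AddCommGroup A] {S : Type*} (f : A → S) : Prop :=
  ∃ (I : Type) (lo : LinearOrder I) (F : I → AddSubgroup A),
    (∀ a : A, ∃ i : I, a ∈ F i) ∧
    (∀ i j : I, lo.lt i j → F j < F i) ∧
    (∀ (i : I) (x y : A), x ∈ F i → (∀ j : I, lo.lt i j → x ∉ F j) →
      y ∈ F i → (∀ j : I, lo.lt i j → y ∉ F j) → f x = f y)

/-- Abelian flag function on a finitely generated torsion-free abelian group. -/
def IsAF {A : Type*} [AddCommGroup A] {S : Type*} (f : A → S) : Prop :=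
  InvariantZ f ∧ HasFlagFiltration f


/-- Invariance under multiplication by integers coprime to `q`. -/
def InvariantCop {A : Type*} [AddCommGroup A] {S : Type*} (q : ℕ) (f : A → S) : Prop :=
  ∀ n : ℤ, IsCoprime n (q : ℤ) → ∀ a : A, f (n • a) = f a

/-- an abelian flag function on `(ℤ/q)²` (q an odd prime), viewed on
`P¹(F_q)`, is constant away from at most one point: there is `x₀` such that `f` is
constant on the nonzero vectors not proportional to `x₀`. -/
theorem stmt_3 (q : ℕ) (hq : q.Prime) (hq2 : q ≠ 2) {S : Type*}
    (f : ZMod q × ZMod q → S)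
    (hf : InvariantCop q f ∧ HasFlagFiltration f) :
    ∃ (x₀ : ZMod q × ZMod q) (s : S),
      ∀ x : ZMod q × ZMod q, x ≠ 0 → (¬∃ c : ZMod q, x = c • x₀) → f x = s := by
  haveI : Fact q.Prime := ⟨hq⟩
  obtain ⟨-, I, lo, F, hcov, hstrict, hconst⟩ := hf
  letI := lo
  -- F is injective, hence I is finite
  have hinj : Function.Injective F := by
    intro i j hij
    rcases lt_trichotomy i j with h | h | h
    · exact absurd (hij ▸ hstrict i j h) (lt_irrefl _)
    · exact h
    · exact absurd (hij ▸ hstrict j i h) (lt_irrefl _)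
  haveI : Finite (AddSubgroup (ZMod q × ZMod q)) :=
    Finite.of_injective (fun B => (B : Set (ZMod q × ZMod q))) SetLike.coe_injective
  haveI : Finite I := Finite.of_injective F hinj
  haveI : Nonempty I := ⟨(hcov 0).choose⟩
  obtain ⟨i₀, hi₀⟩ := Finite.exists_min (id : I → I)
  simp only [id_eq] at hi₀
  -- the top of the chain is everything
  have htop : ∀ a : ZMod q × ZMod q, a ∈ F i₀ := by
    intro a
    obtain ⟨i, hi⟩ := hcov a
    rcases eq_or_lt_of_le (hi₀ i) with h | h
    · exact h ▸ hi
    · exact (hstrict i₀ i h).le hi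
  -- the subgroup B below the top
  obtain ⟨B, hBlt, hFB⟩ : ∃ B : AddSubgroup (ZMod q × ZMod q),
      B < ⊤ ∧ ∀ j : I, i₀ < j → F j ≤ B := by
    by_cases hJ : ∃ j : I, i₀ < j
    · haveI : Nonempty {j : I // i₀ < j} := ⟨⟨hJ.choose, hJ.choose_spec⟩⟩
      obtain ⟨j₀, hj₀⟩ := Finite.exists_min (id : {j : I // i₀ < j} → {j : I // i₀ < j})
      simp only [id_eq] at hj₀
      refine ⟨F j₀.1, ?_, ?_⟩
      · exact lt_of_lt_of_le (hstrict i₀ j₀.1 j₀.2) le_top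
      · intro j hj
        have hle : j₀ ≤ ⟨j, hj⟩ := hj₀ ⟨j, hj⟩
        rcases eq_or_lt_of_le hle with h | h
        · exact le_of_eq (congrArg F (congrArg Subtype.val h)).symm
        · exact (hstrict j₀.1 j h).le
    · refine ⟨⊥, bot_lt_top, fun j hj => absurd ⟨j, hj⟩ hJ⟩
  -- f is constant off B
  obtain ⟨z, -, hz⟩ := SetLike.exists_of_lt hBlt
  have hcB : ∀ x : ZMod q × ZMod q, x ∉ B → f x = f z := by
    intro x hx
    exact hconst i₀ x z (htop x) (fun j hj hxj => hx (hFB j hj hxj))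
      (htop z) (fun j hj hzj => hz (hFB j hj hzj))
  -- closure of B under ZMod q scalars
  have hsmul : ∀ (c : ZMod q) (w : ZMod q × ZMod q), w ∈ B → c • w ∈ B := by
    intro c w hw
    have hc : ((c.val : ℕ) : ZMod q) = c := by simp [ZMod.natCast_val, ZMod.cast_id]
    rw [← hc, Nat.cast_smul_eq_nsmul]
    exact AddSubgroup.nsmul_mem B hw c.val
  -- choose x₀
  by_cases hB : B = ⊥
  · refine ⟨0, f z, fun x hx0 _ => hcB x ?_⟩
    rw [hB]
    simpa using hx0
  · have hex : ∃ x₀ ∈ B, x₀ ≠ (0 : ZMod q × ZMod q) := by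
      by_contra h
      push_neg at h
      exact hB (le_antisymm (fun a ha => by simpa using h a ha) bot_le)
    obtain ⟨x₀, hx₀B, hx₀0⟩ := hex
    refine ⟨x₀, f z, fun x hx0 hxm => hcB x ?_⟩
    intro hxB
    -- then x₀ and x span the plane, so B = ⊤, contradiction
    have hspan : ∀ w : ZMod q × ZMod q, ∃ s t : ZMod q, w = s • x₀ + t • x := by
      intro w
      obtain ⟨a, b⟩ := x₀
      obtain ⟨c, d⟩ := x
      obtain ⟨u, v⟩ := w
      have hdet : a * d - b * c ≠ 0 := by
        intro h
        rcases ne_or_eq a 0 with ha | ha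
        · exact hxm ⟨c * a⁻¹, by
            simp only [Prod.smul_mk, smul_eq_mul, Prod.mk.injEq]
            refine ⟨by field_simp, ?_⟩
            have h2 : a * d = a * (c * a⁻¹ * b) := by
              field_simp
              linear_combination h
            exact mul_left_cancel₀ ha h2⟩
        · have hb : b ≠ 0 := by
            intro hb; exact hx₀0 (by simp [ha, hb, Prod.ext_iff])
          have hc : c = 0 := by
            subst ha
            have h2 : b * c = 0 := by linear_combination -h
            exact (mul_eq_zero.1 h2).resolve_left hb
          exact hxm ⟨d * b⁻¹, by
            simp only [Prod.smul_mk, smul_eq_mul, Prod.mk.injEq, ha, hc]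
            constructor
            · ring
            · field_simp⟩
      refine ⟨(u * d - v * c) * (a * d - b * c)⁻¹, (v * a - u * b) * (a * d - b * c)⁻¹, ?_⟩
      have h1 : (a * d - b * c) * (a * d - b * c)⁻¹ = 1 := mul_inv_cancel₀ hdet
      simp only [Prod.smul_mk, smul_eq_mul, Prod.mk.injEq, Prod.mk_add_mk]
      constructor
      · linear_combination (-u : ZMod q) * h1
      · linear_combination (-v : ZMod q) * h1
    obtain ⟨s, t, hst⟩ := hspan z
    exact hz (hst ▸ B.add_mem (hsmul s x₀ hx₀B) (hsmul t x hxB))
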